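/- Let φ be a GFG-QPTL formula, 𝔄 a hyperassignment, and α ∈ {EA, AE} an alternation flag. Then dual(𝔄) ⊨^{ᾱ} φ if and only if 𝔄 ⊨^α φ; consequently, dual(dual(𝔄)) ⊨^α φ if and only if 𝔄 ⊨^α φ. (Theorem 3, Double Dualization.) -/

import Mathlib

namespace GFG

/-- Temporal valuations. -/
abbrev Val : Type := ℕ → Bool

/-- Assignments over a type `AP` of atomic propositions. -/
abbrev Asg (AP : Type*) : Type _ := AP → Val

section Hyper

variable {X : Type*}

/-- A hyperassignment: a nonempty set of subsets not containing `∅`. -/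
def IsHyp (𝔄 : Set (Set X)) : Prop := 𝔄 ≠ ∅ ∧ ∅ ∉ 𝔄

/-- A choice function for `𝔄`. -/
def IsChoice (𝔄 : Set (Set X)) (ϑ : Set X → X) : Prop := ∀ W ∈ 𝔄, ϑ W ∈ W

/-- The dual hyperassignment. -/
def hdual (𝔄 : Set (Set X)) : Set (Set X) :=
  { Y | ∃ ϑ : Set X → X, IsChoice 𝔄 ϑ ∧ Y = ϑ '' 𝔄 }

/-- The preorder `⊑` on hyperassignments. -/
def hle (𝔄₁ 𝔄₂ : Set (Set X)) : Prop := ∀ W₁ ∈ 𝔄₁, ∃ W₂ ∈ 𝔄₂, W₂ ⊆ W₁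

/-- The equivalence `≡` on hyperassignments. -/
def heqv (𝔄₁ 𝔄₂ : Set (Set X)) : Prop := hle 𝔄₁ 𝔄₂ ∧ hle 𝔄₂ 𝔄₁

/-- `par 𝔄`: partitions of `𝔄` into two disjoint parts. -/
def par (𝔄 : Set (Set X)) : Set (Set (Set X) × Set (Set X)) :=
  { pr | pr.1 ∪ pr.2 = 𝔄 ∧ Disjoint pr.1 pr.2 }

end Hyper

variable {AP : Type*}

/-- `a₁ ≈_p^{>k} a₂`. -/
def ApproxGT (p : AP) (k : ℕ) (a₁ a₂ : Asg AP) : Prop :=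
  (∀ q, q ≠ p → a₁ q = a₂ q) ∧ ∀ t ≤ k, a₁ p t = a₂ p t

/-- `a₁ ≈_p^{≥k} a₂`. -/
def ApproxGE (p : AP) (k : ℕ) (a₁ a₂ : Asg AP) : Prop :=
  (∀ q, q ≠ p → a₁ q = a₂ q) ∧ ∀ t < k, a₁ p t = a₂ p t

/-- Quantifier specifications `ς = (B,S)`. -/
abbrev Spec (AP : Type*) := Set AP × Set AP

/-- A `ς`-functor. -/
def IsSpecFunctor (ς : Spec AP) (F : Asg AP → Val) : Prop :=
  (∀ (k : ℕ) (a₁ a₂ : Asg AP), (∃ p ∈ ς.1, ApproxGT p k a₁ a₂) → F a₁ k = F a₂ k) ∧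
  (∀ (k : ℕ) (a₁ a₂ : Asg AP), (∃ p ∈ ς.2, ApproxGE p k a₁ a₂) → F a₁ k = F a₂ k)

variable [DecidableEq AP]

/-- `ext(a,F,p)`. -/
def extAsg (a : Asg AP) (F : Asg AP → Val) (p : AP) : Asg AP :=
  Function.update a p (F a)

/-- `ext(W,F,p)`. -/
def extSet (W : Set (Asg AP)) (F : Asg AP → Val) (p : AP) : Set (Asg AP) :=
  (fun a => extAsg a F p) '' W

/-- `ext_ς(𝔄,p)`. -/
def extSpec (ς : Spec AP) (𝔄 : Set (Set (Asg AP))) (p : AP) : Set (Set (Asg AP)) :=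
  { Y | ∃ W ∈ 𝔄, ∃ F : Asg AP → Val, IsSpecFunctor ς F ∧ Y = extSet W F p }

/-- Alternation flags. -/
inductive Flag : Type
  | EA : Flag
  | AE : Flag
  deriving DecidableEq

/-- The dual flag. -/
def Flag.dual : Flag → Flag
  | .EA => .AE
  | .AE => .EA

/-- GFG-QPTL formulas (LTL formulas abstracted as arbitrary sets of assignments). -/
inductive Formula (AP : Type*) : Type _ where
  | atom : Set (Asg AP) → Formula AP
  | neg : Formula AP → Formula AP
  | conj : Formula AP → Formula AP → Formula AP
  | disj : Formula AP → Formula AP → Formula AP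
  | ex : AP → Spec AP → Formula AP → Formula AP
  | all : AP → Spec AP → Formula AP → Formula AP

/-- The alternating Hodges semantics `𝔄 ⊨^α φ`. -/
def Sat : Formula AP → Flag → Set (Set (Asg AP)) → Prop
  | .atom Ψ, .EA, 𝔄 => ∃ W ∈ 𝔄, W ⊆ Ψ
  | .atom Ψ, .AE, 𝔄 => ∀ W ∈ 𝔄, W ∩ Ψ ≠ ∅
  | .neg φ, α, 𝔄 => ¬ Sat φ α.dual 𝔄
  | .conj φ₁ φ₂, .EA, 𝔄 =>
      ∀ pr ∈ par 𝔄, (pr.1 ≠ ∅ ∧ Sat φ₁ .EA pr.1) ∨ (pr.2 ≠ ∅ ∧ Sat φ₂ .EA pr.2)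
  | .conj φ₁ φ₂, .AE, 𝔄 =>
      ∀ pr ∈ par (hdual 𝔄), (pr.1 ≠ ∅ ∧ Sat φ₁ .EA pr.1) ∨ (pr.2 ≠ ∅ ∧ Sat φ₂ .EA pr.2)
  | .disj φ₁ φ₂, .AE, 𝔄 =>
      ∃ pr ∈ par 𝔄, (pr.1 ≠ ∅ → Sat φ₁ .AE pr.1) ∧ (pr.2 ≠ ∅ → Sat φ₂ .AE pr.2)
  | .disj φ₁ φ₂, .EA, 𝔄 =>
      ∃ pr ∈ par (hdual 𝔄), (pr.1 ≠ ∅ → Sat φ₁ .AE pr.1) ∧ (pr.2 ≠ ∅ → Sat φ₂ .AE pr.2)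
  | .ex p ς φ, .EA, 𝔄 => Sat φ .EA (extSpec ς 𝔄 p)
  | .ex p ς φ, .AE, 𝔄 => Sat φ .EA (extSpec ς (hdual 𝔄) p)
  | .all p ς φ, .AE, 𝔄 => Sat φ .AE (extSpec ς 𝔄 p)
  | .all p ς φ, .EA, 𝔄 => Sat φ .AE (extSpec ς (hdual 𝔄) p)

section AuxHyper

variable {X : Type*} [Nonempty X]

lemma exists_choice {𝔄 : Set (Set X)} (P : Set X → X → Prop)
    (h : ∀ W ∈ 𝔄, ∃ x ∈ W, P W x) :
    ∃ ϑ : Set X → X, IsChoice 𝔄 ϑ ∧ ∀ W ∈ 𝔄, P W (ϑ W) := by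
  classical
  have h' : ∀ W : Set X, ∃ x, W ∈ 𝔄 → x ∈ W ∧ P W x := by
    intro W
    by_cases hW : W ∈ 𝔄
    · obtain ⟨x, hx1, hx2⟩ := h W hW
      exact ⟨x, fun _ => ⟨hx1, hx2⟩⟩
    · exact ⟨Classical.arbitrary X, fun hc => absurd hc hW⟩
  choose ϑ hϑ using h'
  exact ⟨ϑ, fun W hW => (hϑ W hW).1, fun W hW => (hϑ W hW).2⟩

lemma hdual_antitone {𝔄₁ 𝔄₂ : Set (Set X)} (h : hle 𝔄₁ 𝔄₂) :
    hle (hdual 𝔄₂) (hdual 𝔄₁) := by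
  classical
  rintro Y ⟨ϑ, hϑ, rfl⟩
  have h' : ∀ W : Set X, ∃ W₂, W ∈ 𝔄₁ → W₂ ∈ 𝔄₂ ∧ W₂ ⊆ W := by
    intro W
    by_cases hW : W ∈ 𝔄₁
    · obtain ⟨W₂, h1, h2⟩ := h W hW
      exact ⟨W₂, fun _ => ⟨h1, h2⟩⟩
    · exact ⟨∅, fun hc => absurd hc hW⟩
  choose g hg using h'
  refine ⟨(fun W => ϑ (g W)) '' 𝔄₁, ⟨fun W => ϑ (g W), ?_, rfl⟩, ?_⟩
  · intro W hW
    exact (hg W hW).2 (hϑ _ (hg W hW).1)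
  · rintro x ⟨W, hW, rfl⟩
    exact ⟨g W, (hg W hW).1, rfl⟩

lemma par_transport {𝔅₁ 𝔅₂ : Set (Set X)} (h : hle 𝔅₁ 𝔅₂)
    {pr : Set (Set X) × Set (Set X)} (hpr : pr ∈ par 𝔅₂) :
    ∃ pr' ∈ par 𝔅₁, hle pr'.1 pr.1 ∧ hle pr'.2 pr.2 ∧
      (pr'.1 ≠ ∅ → pr.1 ≠ ∅) ∧ (pr'.2 ≠ ∅ → pr.2 ≠ ∅) := by
  classical
  have h' : ∀ W : Set X, ∃ W₂, W ∈ 𝔅₁ → W₂ ∈ 𝔅₂ ∧ W₂ ⊆ W := by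
    intro W
    by_cases hW : W ∈ 𝔅₁
    · obtain ⟨W₂, h1, h2⟩ := h W hW
      exact ⟨W₂, fun _ => ⟨h1, h2⟩⟩
    · exact ⟨∅, fun hc => absurd hc hW⟩
  choose g hg using h'
  refine ⟨({W ∈ 𝔅₁ | g W ∈ pr.1}, {W ∈ 𝔅₁ | g W ∉ pr.1}), ⟨?_, ?_⟩, ?_, ?_, ?_, ?_⟩
  · ext W
    simp only [Set.mem_union, Set.mem_setOf_eq]
    constructor
    · rintro (⟨hW, _⟩ | ⟨hW, _⟩) <;> exact hW
    · intro hW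
      by_cases hg1 : g W ∈ pr.1
      · exact Or.inl ⟨hW, hg1⟩
      · exact Or.inr ⟨hW, hg1⟩
  · rw [Set.disjoint_left]
    rintro W ⟨_, h1⟩ ⟨_, h2⟩
    exact h2 h1
  · rintro W ⟨hW, hg1⟩
    exact ⟨g W, hg1, (hg W hW).2⟩
  · rintro W ⟨hW, hg1⟩
    have hmem : g W ∈ pr.1 ∪ pr.2 := by
      rw [hpr.1]; exact (hg W hW).1
    rcases hmem with hm | hm
    · exact absurd hm hg1
    · exact ⟨g W, hm, (hg W hW).2⟩
  · intro hne
    obtain ⟨W, hW, hg1⟩ := Set.nonempty_iff_ne_empty.mpr hne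
    exact Set.nonempty_iff_ne_empty.mp ⟨g W, hg1⟩
  · intro hne
    obtain ⟨W, hW, hg1⟩ := Set.nonempty_iff_ne_empty.mpr hne
    have hmem : g W ∈ pr.1 ∪ pr.2 := by
      rw [hpr.1]; exact (hg W hW).1
    rcases hmem with hm | hm
    · exact absurd hm hg1
    · exact Set.nonempty_iff_ne_empty.mp ⟨g W, hm⟩

lemma hle_ddual (𝔄 : Set (Set X)) : hle 𝔄 (hdual (hdual 𝔄)) := by
  intro W hW
  have hmem : ∀ Y ∈ hdual 𝔄, ∃ x ∈ Y, x ∈ W := by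
    rintro Y ⟨ϑ, hϑ, rfl⟩
    exact ⟨ϑ W, ⟨W, hW, rfl⟩, hϑ W hW⟩
  obtain ⟨Ξ, hΞ, hP⟩ := exists_choice (𝔄 := hdual 𝔄) (fun _ x => x ∈ W) hmem
  refine ⟨Ξ '' hdual 𝔄, ⟨Ξ, hΞ, rfl⟩, ?_⟩
  rintro x ⟨Y, hY, rfl⟩
  exact hP Y hY

lemma ddual_hle (𝔄 : Set (Set X)) : hle (hdual (hdual 𝔄)) 𝔄 := by
  rintro Z ⟨Ξ, hΞ, rfl⟩
  by_contra hc
  push_neg at hc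
  have hch : ∀ W ∈ 𝔄, ∃ x ∈ W, x ∉ Ξ '' hdual 𝔄 := by
    intro W hW
    exact Set.not_subset.mp (hc W hW)
  obtain ⟨ϑ, hϑ, hP⟩ := exists_choice _ hch
  have hY : ϑ '' 𝔄 ∈ hdual 𝔄 := ⟨ϑ, hϑ, rfl⟩
  have h1 : Ξ (ϑ '' 𝔄) ∈ ϑ '' 𝔄 := hΞ _ hY
  obtain ⟨W, hW, hWe⟩ := h1
  exact hP W hW (hWe ▸ ⟨ϑ '' 𝔄, hY, rfl⟩)

lemma atom_dual_EA {𝔄 : Set (Set X)} {Ψ : Set X} :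
    (∀ Y ∈ hdual 𝔄, Y ∩ Ψ ≠ ∅) ↔ ∃ W ∈ 𝔄, W ⊆ Ψ := by
  constructor
  · intro h
    by_contra hc
    push_neg at hc
    have hch : ∀ W ∈ 𝔄, ∃ x ∈ W, x ∉ Ψ := fun W hW => Set.not_subset.mp (hc W hW)
    obtain ⟨ϑ, hϑ, hP⟩ := exists_choice _ hch
    refine h (ϑ '' 𝔄) ⟨ϑ, hϑ, rfl⟩ ?_
    rw [Set.eq_empty_iff_forall_notMem]
    rintro x ⟨⟨W, hW, rfl⟩, hx⟩
    exact hP W hW hx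
  · rintro ⟨W, hW, hWΨ⟩ Y ⟨ϑ, hϑ, rfl⟩ hYP
    have : ϑ W ∈ ϑ '' 𝔄 ∩ Ψ := ⟨⟨W, hW, rfl⟩, hWΨ (hϑ W hW)⟩
    rw [hYP] at this
    exact this

lemma atom_dual_AE {𝔄 : Set (Set X)} {Ψ : Set X} :
    (∃ Y ∈ hdual 𝔄, Y ⊆ Ψ) ↔ ∀ W ∈ 𝔄, W ∩ Ψ ≠ ∅ := by
  constructor
  · rintro ⟨Y, ⟨ϑ, hϑ, rfl⟩, hYΨ⟩ W hW hcon
    have : ϑ W ∈ W ∩ Ψ := ⟨hϑ W hW, hYΨ ⟨W, hW, rfl⟩⟩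
    rw [hcon] at this
    exact this
  · intro h
    have hch : ∀ W ∈ 𝔄, ∃ x ∈ W, x ∈ Ψ := by
      intro W hW
      obtain ⟨x, hx⟩ := Set.nonempty_iff_ne_empty.mpr (h W hW)
      exact ⟨x, hx.1, hx.2⟩
    obtain ⟨ϑ, hϑ, hP⟩ := exists_choice _ hch
    refine ⟨ϑ '' 𝔄, ⟨ϑ, hϑ, rfl⟩, ?_⟩
    rintro x ⟨W, hW, rfl⟩
    exact hP W hW

end AuxHyper

lemma extSpec_mono {ς : Spec AP} {𝔄₁ 𝔄₂ : Set (Set (Asg AP))} {p : AP}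
    (h : hle 𝔄₁ 𝔄₂) : hle (extSpec ς 𝔄₁ p) (extSpec ς 𝔄₂ p) := by
  rintro Y ⟨W, hW, F, hF, rfl⟩
  obtain ⟨W₂, hW₂, hsub⟩ := h W hW
  exact ⟨extSet W₂ F p, ⟨W₂, hW₂, F, hF, rfl⟩, Set.image_mono hsub⟩

lemma sat_mono (φ : Formula AP) :
    ∀ 𝔄₁ 𝔄₂ : Set (Set (Asg AP)), hle 𝔄₁ 𝔄₂ →
      (Sat φ .EA 𝔄₁ → Sat φ .EA 𝔄₂) ∧ (Sat φ .AE 𝔄₂ → Sat φ .AE 𝔄₁) := by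
  induction φ with
  | atom Ψ =>
    intro 𝔄₁ 𝔄₂ h
    constructor
    · rintro ⟨W, hW, hWΨ⟩
      obtain ⟨W₂, h2, hs⟩ := h W hW
      exact ⟨W₂, h2, hs.trans hWΨ⟩
    · intro hs W hW hcon
      obtain ⟨W₂, h2, hsub⟩ := h W hW
      apply hs W₂ h2
      rw [← Set.subset_empty_iff, ← hcon]
      exact Set.inter_subset_inter_left _ hsub
  | neg φ ih =>
    intro 𝔄₁ 𝔄₂ h
    exact ⟨fun h1 h2 => h1 ((ih 𝔄₁ 𝔄₂ h).2 h2), fun h2 h1 => h2 ((ih 𝔄₁ 𝔄₂ h).1 h1)⟩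
  | conj φ₁ φ₂ ih₁ ih₂ =>
    have key : ∀ 𝔅₁ 𝔅₂ : Set (Set (Asg AP)), hle 𝔅₁ 𝔅₂ →
        (∀ pr ∈ par 𝔅₁, (pr.1 ≠ ∅ ∧ Sat φ₁ .EA pr.1) ∨ (pr.2 ≠ ∅ ∧ Sat φ₂ .EA pr.2)) →
        ∀ pr ∈ par 𝔅₂, (pr.1 ≠ ∅ ∧ Sat φ₁ .EA pr.1) ∨ (pr.2 ≠ ∅ ∧ Sat φ₂ .EA pr.2) := by
      intro 𝔅₁ 𝔅₂ h hsat pr hpr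
      obtain ⟨pr', hpr', h1, h2, hn1, hn2⟩ := par_transport h hpr
      rcases hsat pr' hpr' with ⟨hne, hs⟩ | ⟨hne, hs⟩
      · exact Or.inl ⟨hn1 hne, (ih₁ pr'.1 pr.1 h1).1 hs⟩
      · exact Or.inr ⟨hn2 hne, (ih₂ pr'.2 pr.2 h2).1 hs⟩
    intro 𝔄₁ 𝔄₂ h
    exact ⟨key _ _ h, key _ _ (hdual_antitone h)⟩
  | disj φ₁ φ₂ ih₁ ih₂ =>
    have key : ∀ 𝔅₁ 𝔅₂ : Set (Set (Asg AP)), hle 𝔅₁ 𝔅₂ →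
        (∃ pr ∈ par 𝔅₂, (pr.1 ≠ ∅ → Sat φ₁ .AE pr.1) ∧ (pr.2 ≠ ∅ → Sat φ₂ .AE pr.2)) →
        ∃ pr ∈ par 𝔅₁, (pr.1 ≠ ∅ → Sat φ₁ .AE pr.1) ∧ (pr.2 ≠ ∅ → Sat φ₂ .AE pr.2) := by
      rintro 𝔅₁ 𝔅₂ h ⟨pr, hpr, hc1, hc2⟩
      obtain ⟨pr', hpr', h1, h2, hn1, hn2⟩ := par_transport h hpr
      exact ⟨pr', hpr', fun hne => (ih₁ pr'.1 pr.1 h1).2 (hc1 (hn1 hne)),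
        fun hne => (ih₂ pr'.2 pr.2 h2).2 (hc2 (hn2 hne))⟩
    intro 𝔄₁ 𝔄₂ h
    exact ⟨key _ _ (hdual_antitone h), key _ _ h⟩
  | ex p ς φ ih =>
    intro 𝔄₁ 𝔄₂ h
    exact ⟨(ih _ _ (extSpec_mono h)).1, (ih _ _ (extSpec_mono (hdual_antitone h))).1⟩
  | all p ς φ ih =>
    intro 𝔄₁ 𝔄₂ h
    exact ⟨(ih _ _ (extSpec_mono (hdual_antitone h))).2, (ih _ _ (extSpec_mono h)).2⟩

lemma sat_heqv (φ : Formula AP) {𝔄₁ 𝔄₂ : Set (Set (Asg AP))} (h : heqv 𝔄₁ 𝔄₂)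
    (α : Flag) : Sat φ α 𝔄₁ ↔ Sat φ α 𝔄₂ := by
  cases α
  · exact ⟨(sat_mono φ _ _ h.1).1, (sat_mono φ _ _ h.2).1⟩
  · exact ⟨(sat_mono φ _ _ h.2).2, (sat_mono φ _ _ h.1).2⟩

/-- Theorem 3 (Double Dualization). -/
theorem double_dualization (φ : Formula AP)
    (𝔄 : Set (Set (Asg AP))) (h : IsHyp 𝔄) (α : Flag) :
    (Sat φ α.dual (hdual 𝔄) ↔ Sat φ α 𝔄) ∧
    (Sat φ α (hdual (hdual 𝔄)) ↔ Sat φ α 𝔄) := by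
  have hdd : heqv (hdual (hdual 𝔄)) 𝔄 := ⟨ddual_hle 𝔄, hle_ddual 𝔄⟩
  have main : ∀ ψ : Formula AP, ∀ β : Flag, Sat ψ β.dual (hdual 𝔄) ↔ Sat ψ β 𝔄 := by
    intro ψ
    induction ψ with
    | atom Ψ =>
      intro β
      cases β
      · exact atom_dual_EA
      · exact atom_dual_AE
    | neg φ' ih =>
      intro β
      cases β
      · exact not_congr (ih .AE)
      · exact not_congr (ih .EA)
    | conj φ₁ φ₂ ih₁ ih₂ =>
      intro β
      cases β
      · exact sat_heqv (Formula.conj φ₁ φ₂) hdd .EA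
      · exact Iff.rfl
    | disj φ₁ φ₂ ih₁ ih₂ =>
      intro β
      cases β
      · exact Iff.rfl
      · exact sat_heqv (Formula.disj φ₁ φ₂) hdd .AE
    | ex p ς φ' ih =>
      intro β
      cases β
      · exact sat_heqv (Formula.ex p ς φ') hdd .EA
      · exact Iff.rfl
    | all p ς φ' ih =>
      intro β
      cases β
      · exact Iff.rfl
      · exact sat_heqv (Formula.all p ς φ') hdd .AE
  exact ⟨main φ α, sat_heqv φ hdd α⟩

end GFG
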